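/- Fix real constants A, B with A > 0 and A·B > 1. For (x, z) ∈ ℝ² define the symmetric 3×3 real matrix G(x, z) = [[A·e^z, 1, 0], [1, x² + B·e^{−z}, x], [0, x, 1]]. Then G(x, z) is positive definite for every (x, z) ∈ ℝ². Hence G defines a Riemannian metric on ℝ³ (constant in the y-coordinate). -/

import Mathlib

open Real Matrix

/-- Krouglov's candidate compatible metric on `ℝ³`:
`G(x, z) = [[A·e^z, 1, 0], [1, x² + B·e^{-z}, x], [0, x, 1]]`. -/
noncomputable def krouglovMetric (A B x z : ℝ) : Matrix (Fin 3) (Fin 3) ℝ :=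
  !![A * exp z, 1, 0;
     1, x ^ 2 + B * exp (-z), x;
     0, x, 1]

/-- For `A > 0` and `A·B > 1`, the matrix `G(x, z)` is positive
definite for every `(x, z) ∈ ℝ²`; hence `G` defines a Riemannian metric on `ℝ³`. -/
theorem krouglovMetric_posDef (A B : ℝ) (hA : 0 < A) (hAB : 1 < A * B) :
    ∀ x z : ℝ, (krouglovMetric A B x z).PosDef := by
  intro x z
  rw [Matrix.posDef_iff_dotProduct_mulVec]
  constructor
  · ext i j
    fin_cases i <;> fin_cases j <;>
      simp [krouglovMetric, Matrix.conjTranspose, Matrix.transpose_apply, Matrix.vecHead, Matrix.vecTail]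
  · intro v hv
    have ha : 0 < A * exp z := mul_pos hA (exp_pos z)
    have hb : 0 < B * exp (-z) := by
      have hB : 0 < B := by nlinarith
      exact mul_pos hB (exp_pos (-z))
    have hab : 1 < (A * exp z) * (B * exp (-z)) := by
      have : (A * exp z) * (B * exp (-z)) = A * B * (exp z * exp (-z)) := by ring
      rw [this, ← exp_add, add_neg_cancel, exp_zero, mul_one]
      exact hAB
    have hQ : v ⬝ᵥ (krouglovMetric A B x z).mulVec v =
        (A * exp z) * (v 0 + v 1 / (A * exp z)) ^ 2
        + (B * exp (-z) - 1 / (A * exp z)) * (v 1) ^ 2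
        + (v 2 + x * v 1) ^ 2 := by
      simp [krouglovMetric, Matrix.mulVec, dotProduct, Fin.sum_univ_three]
      field_simp
      ring
    have hv' : v 0 ≠ 0 ∨ v 1 ≠ 0 ∨ v 2 ≠ 0 := by
      by_contra h
      push_neg at h
      apply hv
      ext i
      fin_cases i <;> simp [h.1, h.2.1, h.2.2]
    have key : B * exp (-z) - 1 / (A * exp z) > 0 := by
      rw [gt_iff_lt, sub_pos, div_lt_iff₀ ha]
      linarith [hab]
    rw [star_trivial, hQ]
    rcases hv' with h | h | h
    · have h1 : 0 < (A * exp z) * (v 0 + v 1 / (A * exp z)) ^ 2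
          + (B * exp (-z) - 1 / (A * exp z)) * (v 1) ^ 2 := by
        rcases eq_or_ne (v 1) 0 with h1 | h1
        · have : v 0 + v 1 / (A * exp z) = v 0 := by rw [h1]; simp
          rw [this, h1]
          positivity
        · nlinarith [sq_nonneg (v 0 + v 1 / (A * exp z)), sq_pos_of_ne_zero h1]
      nlinarith [sq_nonneg (v 2 + x * v 1)]
    · nlinarith [sq_nonneg (v 0 + v 1 / (A * exp z)), sq_pos_of_ne_zero h,
        sq_nonneg (v 2 + x * v 1)]
    · rcases eq_or_ne (v 1) 0 with h1 | h1
      · have h2 : v 2 + x * v 1 ≠ 0 := by rw [h1]; simpa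
        nlinarith [sq_nonneg (v 0 + v 1 / (A * exp z)), sq_pos_of_ne_zero h2,
          sq_nonneg (v 1)]
      · nlinarith [sq_nonneg (v 0 + v 1 / (A * exp z)), sq_pos_of_ne_zero h1,
          sq_nonneg (v 2 + x * v 1)]
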